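/- Let α ∈ ℝ \ {0, 2/3}, β a positive integer, and F(s) = s^β. On the product manifold (0,∞) × ℝ² with coordinates (r,x,y), the warped product Riemannian metric g = dr² + r^{2α}(dx² + dy²) satisfies E_F(g) = λ g for some constant λ if and only if α = −2(2β² − 3β + 1)/(2β − 3). Moreover the scalar curvature of g is S = 2α(2 − 3α)/r². -/

import Mathlib

/-!
**STATEMENT 7.**  Let `α ∈ ℝ \ {0, 2/3}`, `β` a positive integer, and
`F(s) = s^β`.  On the product manifold `(0,∞) × ℝ²` with coordinates
`(r, x, y)`, the warped product Riemannian metric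
`g = dr² + r^{2α}(dx² + dy²)` satisfies `E_F(g) = λ g` for some constant `λ`
if and only if `α = −2(2β² − 3β + 1)/(2β − 3)`.  Moreover the scalar curvature
of `g` is `S = 2α(2 − 3α)/r²`.

The manifold is covered by the single global chart with coordinates indexed by
`Fin 3` (with `r = x 0`, restricted to `0 < x 0`), and all geometric
quantities are built honestly from the matrix of components of `g`:  `pd` is
the coordinate partial derivative, `christoffel` the Christoffel symbols of
the Levi-Civita connection, `ricci` the Ricci tensor, `scal` the scalar
curvature, `hessian` the Hessian, `lap` the Laplacian `Δf = −Tr(Hess f)`, and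
`EF` the F-Einstein tensor
`E_F(g) = F'(S)·Ric − Hess F'(S) − (Δ F'(S) + (1/2) F(S)) g`.
-/

noncomputable section

/-- Partial derivative along the `i`-th coordinate. -/
def pd {n : ℕ} (i : Fin n) (f : (Fin n → ℝ) → ℝ) (x : Fin n → ℝ) : ℝ :=
  deriv (fun s => f (Function.update x i s)) (x i)

/-- Christoffel symbols `Γ^k_{ij}` of the Levi-Civita connection of `g`. -/
def christoffel {n : ℕ} (g : (Fin n → ℝ) → Matrix (Fin n) (Fin n) ℝ)
    (k i j : Fin n) (x : Fin n → ℝ) : ℝ :=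
  (1 / 2) * ∑ l, (g x)⁻¹ k l *
    (pd i (fun y => g y j l) x + pd j (fun y => g y i l) x
      - pd l (fun y => g y i j) x)

/-- The Ricci tensor of `g` in coordinates:
`Ric_{ij} = ∂_k Γ^k_{ij} − ∂_i Γ^k_{kj} + Γ^k_{kl} Γ^l_{ij} − Γ^k_{il} Γ^l_{kj}`. -/
def ricci {n : ℕ} (g : (Fin n → ℝ) → Matrix (Fin n) (Fin n) ℝ)
    (i j : Fin n) (x : Fin n → ℝ) : ℝ :=
  (∑ k, (pd k (fun y => christoffel g k i j y) x
          - pd i (fun y => christoffel g k k j y) x))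
    + ∑ k, ∑ l, (christoffel g k k l x * christoffel g l i j x
          - christoffel g k i l x * christoffel g l k j x)

/-- The scalar curvature `S = g^{ij} Ric_{ij}`. -/
def scal {n : ℕ} (g : (Fin n → ℝ) → Matrix (Fin n) (Fin n) ℝ)
    (x : Fin n → ℝ) : ℝ :=
  ∑ i, ∑ j, (g x)⁻¹ i j * ricci g i j x

/-- The Hessian of `f` with respect to `g`:
`(Hess f)_{ij} = ∂ᵢ∂ⱼ f − Γ^k_{ij} ∂_k f`. -/
def hessian {n : ℕ} (g : (Fin n → ℝ) → Matrix (Fin n) (Fin n) ℝ)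
    (f : (Fin n → ℝ) → ℝ) (i j : Fin n) (x : Fin n → ℝ) : ℝ :=
  pd i (fun y => pd j f y) x - ∑ k, christoffel g k i j x * pd k f x

/-- The Laplacian `Δ f = −Tr (Hess f)` with respect to `g`. -/
def lap {n : ℕ} (g : (Fin n → ℝ) → Matrix (Fin n) (Fin n) ℝ)
    (f : (Fin n → ℝ) → ℝ) (x : Fin n → ℝ) : ℝ :=
  -∑ i, ∑ j, (g x)⁻¹ i j * hessian g f i j x

/-- The F-Einstein tensor
`E_F(g) = F'(S)·Ric − Hess F'(S) − (Δ F'(S) + (1/2) F(S)) g`. -/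
def EF {n : ℕ} (F : ℝ → ℝ) (g : (Fin n → ℝ) → Matrix (Fin n) (Fin n) ℝ)
    (i j : Fin n) (x : Fin n → ℝ) : ℝ :=
  deriv F (scal g x) * ricci g i j x
    - hessian g (fun y => deriv F (scal g y)) i j x
    - (lap g (fun y => deriv F (scal g y)) x + (1 / 2) * F (scal g x)) * g x i j

/-- The warped product metric `g = dr² + r^{2α}(dx² + dy²)` on
`(0,∞) × ℝ²`, in the coordinates `(r, x, y) = (x 0, x 1, x 2)`. -/
def gW (α : ℝ) (x : Fin 3 → ℝ) : Matrix (Fin 3) (Fin 3) ℝ :=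
  Matrix.diagonal ![1, x 0 ^ (2 * α), x 0 ^ (2 * α)]

/-! ### Helper lemmas -/

lemma pd_ne_zero_of_radial {f : (Fin 3 → ℝ) → ℝ} {h : ℝ → ℝ}
    (hf : ∀ y : Fin 3 → ℝ, 0 < y 0 → f y = h (y 0)) {i : Fin 3} (hi : i ≠ 0)
    (x : Fin 3 → ℝ) (hx : 0 < x 0) : pd i f x = 0 := by
  unfold pd
  have key : (fun s => f (Function.update x i s)) = fun _ => h (x 0) := by
    funext s
    have h0 : Function.update x i s 0 = x 0 := Function.update_of_ne (Ne.symm hi) _ _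
    rw [hf _ (by rw [h0]; exact hx), h0]
  rw [key, deriv_const]

lemma pd_zero_of_radial {f : (Fin 3 → ℝ) → ℝ} {h : ℝ → ℝ} {h' : ℝ}
    (hf : ∀ y : Fin 3 → ℝ, 0 < y 0 → f y = h (y 0))
    (x : Fin 3 → ℝ) (hx : 0 < x 0) (hd : HasDerivAt h h' (x 0)) : pd 0 f x = h' := by
  unfold pd
  have hev : (fun s => f (Function.update x 0 s)) =ᶠ[nhds (x 0)] h := by
    filter_upwards [eventually_gt_nhds hx] with s hs
    have h0 : Function.update x 0 s 0 = s := Function.update_self _ _ _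
    rw [hf _ (by rw [h0]; exact hs), h0]
  rw [hev.deriv_eq, hd.deriv]

lemma hasDerivAt_CR (C t : ℝ) {r : ℝ} (hr : 0 < r) :
    HasDerivAt (fun s : ℝ => C * s ^ t) (C * t * r ^ (t - 1)) r := by
  simpa [mul_assoc] using (Real.hasDerivAt_rpow_const (p := t) (Or.inl hr.ne')).const_mul C

def tE (α : ℝ) : Fin 3 → ℝ := ![0, 2*α, 2*α]

lemma gW_entry (α : ℝ) (x : Fin 3 → ℝ) (i j : Fin 3) :
    gW α x i j = if i = j then x 0 ^ (tE α i) else 0 := by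
  fin_cases i <;> fin_cases j <;>
    simp [gW, tE, Matrix.diagonal_apply]


lemma gW_inv (α : ℝ) (x : Fin 3 → ℝ) (hx : 0 < x 0) (i j : Fin 3) :
    (gW α x)⁻¹ i j = if i = j then x 0 ^ (-(tE α i)) else 0 := by
  have hne : x 0 ^ (2*α) ≠ 0 := (Real.rpow_pos_of_pos hx _).ne'
  have hinv : (gW α x)⁻¹ = Matrix.diagonal ![1, x 0 ^ (-(2*α)), x 0 ^ (-(2*α))] := by
    apply Matrix.inv_eq_right_inv
    rw [gW, Matrix.diagonal_mul_diagonal]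
    ext a b
    fin_cases a <;> fin_cases b <;>
      simp [Matrix.diagonal_apply, Matrix.one_apply, Real.rpow_neg hx.le,
        mul_inv_cancel₀ hne]
  rw [hinv]
  fin_cases i <;> fin_cases j <;> simp [tE, Matrix.diagonal_apply]

lemma pd_gW (α : ℝ) (i j l : Fin 3) (x : Fin 3 → ℝ) (hx : 0 < x 0) :
    pd i (fun y => gW α y j l) x
      = if i = 0 ∧ j = l then tE α j * x 0 ^ (tE α j - 1) else 0 := by
  by_cases hjl : j = l
  · subst hjl
    have hf : ∀ y : Fin 3 → ℝ, 0 < y 0 →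
        gW α y j j = (fun r : ℝ => r ^ (tE α j)) (y 0) := by
      intro y _; rw [gW_entry, if_pos rfl]
    by_cases hi : i = 0
    · subst hi
      rw [if_pos ⟨rfl, rfl⟩]
      exact pd_zero_of_radial hf x hx
        (Real.hasDerivAt_rpow_const (Or.inl hx.ne'))
    · rw [if_neg (fun hc => hi hc.1)]
      exact pd_ne_zero_of_radial (h := fun r => r ^ tE α j) hf hi x hx
  · rw [if_neg (fun hc => hjl hc.2)]
    have hf : ∀ y : Fin 3 → ℝ, 0 < y 0 →
        gW α y j l = (fun _ : ℝ => (0:ℝ)) (y 0) := by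
      intro y _; rw [gW_entry, if_neg hjl]
    by_cases hi : i = 0
    · subst hi; exact pd_zero_of_radial hf x hx (hasDerivAt_const _ _)
    · exact pd_ne_zero_of_radial (h := fun _ => (0:ℝ)) hf hi x hx

/-- Christoffel coefficient. -/
def cC (α : ℝ) (k i j : Fin 3) : ℝ :=
  if k = 0 ∧ i = j ∧ i ≠ 0 then -α
  else if k ≠ 0 ∧ ((i = 0 ∧ j = k) ∨ (j = 0 ∧ i = k)) then α else 0

/-- Christoffel exponent. -/
def eC (α : ℝ) (k i j : Fin 3) : ℝ :=
  if k = 0 ∧ i = j ∧ i ≠ 0 then 2*α - 1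
  else if k ≠ 0 ∧ ((i = 0 ∧ j = k) ∨ (j = 0 ∧ i = k)) then -1 else 0

set_option maxHeartbeats 1000000 in
lemma christoffel_eq (α : ℝ) (k i j : Fin 3) (x : Fin 3 → ℝ) (hx : 0 < x 0) :
    christoffel (gW α) k i j x = cC α k i j * x 0 ^ (eC α k i j) := by
  have hxne : x 0 ≠ 0 := hx.ne'
  have hAne : x 0 ^ (2*α) ≠ 0 := (Real.rpow_pos_of_pos hx _).ne'
  have hinv := gW_inv α x hx
  have hpd := fun i j l => pd_gW α i j l x hx
  fin_cases k <;> fin_cases i <;> fin_cases j <;>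
    simp only [christoffel, Fin.sum_univ_three, hinv, hpd] <;>
    norm_num [cC, eC, tE, Fin.ext_iff] <;>
    simp only [Real.rpow_sub hx, Real.rpow_neg hx.le, Real.rpow_one,
      Real.rpow_zero] <;>
    field_simp <;> ring

lemma pd_christoffel (α : ℝ) (p k i j : Fin 3) (x : Fin 3 → ℝ) (hx : 0 < x 0) :
    pd p (fun y => christoffel (gW α) k i j y) x =
      if p = 0 then cC α k i j * eC α k i j * x 0 ^ (eC α k i j - 1) else 0 := by
  have hf : ∀ y : Fin 3 → ℝ, 0 < y 0 →
      christoffel (gW α) k i j y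
        = (fun r : ℝ => cC α k i j * r ^ eC α k i j) (y 0) :=
    fun y hy => christoffel_eq α k i j y hy
  by_cases hp : p = 0
  · subst hp
    rw [if_pos rfl]
    exact pd_zero_of_radial hf x hx (hasDerivAt_CR _ _ hx)
  · rw [if_neg hp]
    exact pd_ne_zero_of_radial (h := fun r => cC α k i j * r ^ eC α k i j) hf hp x hx

/-- Ricci coefficient. -/
def rC (α : ℝ) (i j : Fin 3) : ℝ :=
  if i = 0 ∧ j = 0 then -2*α*(α-1) else if i = j then -α*(2*α-1) else 0

/-- Ricci exponent. -/
def eR (α : ℝ) (i j : Fin 3) : ℝ :=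
  if i = 0 ∧ j = 0 then -2 else 2*α - 2

set_option maxHeartbeats 1000000 in
lemma ricci_eq (α : ℝ) (i j : Fin 3) (x : Fin 3 → ℝ) (hx : 0 < x 0) :
    ricci (gW α) i j x = rC α i j * x 0 ^ (eR α i j) := by
  have hxne : x 0 ≠ 0 := hx.ne'
  have hAne : x 0 ^ (2*α) ≠ 0 := (Real.rpow_pos_of_pos hx _).ne'
  have hch := fun k i j => christoffel_eq α k i j x hx
  have hpd := fun p k i j => pd_christoffel α p k i j x hx
  fin_cases i <;> fin_cases j <;>
    simp only [ricci, Fin.sum_univ_three, hch, hpd] <;>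
    norm_num [cC, eC, rC, eR, Fin.ext_iff] <;>
    simp only [Real.rpow_sub hx, Real.rpow_neg hx.le, Real.rpow_one,
      Real.rpow_zero, Real.rpow_two] <;>
    field_simp <;> ring

lemma scal_eq (α : ℝ) (x : Fin 3 → ℝ) (hx : 0 < x 0) :
    scal (gW α) x = 2*α*(2 - 3*α) * x 0 ^ (-2 : ℝ) := by
  have hxne : x 0 ≠ 0 := hx.ne'
  have hAne : x 0 ^ (2*α) ≠ 0 := (Real.rpow_pos_of_pos hx _).ne'
  have hric := fun i j => ricci_eq α i j x hx
  have hinv := gW_inv α x hx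
  simp only [scal, Fin.sum_univ_three, hric, hinv]
  norm_num [rC, eR, tE, Fin.ext_iff, Matrix.cons_val_two, Matrix.tail_cons, Matrix.head_cons]
  simp only [Real.rpow_sub hx, Real.rpow_neg hx.le, Real.rpow_one,
    Real.rpow_zero, Real.rpow_two]
  field_simp
  ring

lemma phi_eq (α : ℝ) (β : ℕ) (hβ : 0 < β) (y : Fin 3 → ℝ) (hy : 0 < y 0) :
    deriv (fun s : ℝ => s ^ β) (scal (gW α) y)
      = (β * (2*α*(2 - 3*α))^(β-1)) * y 0 ^ ((2:ℝ) - 2*β) := by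
  rw [deriv_pow_field, scal_eq α y hy, mul_pow, ← Real.rpow_natCast (y 0 ^ (-2:ℝ)),
    ← Real.rpow_mul hy.le]
  have : (-2 : ℝ) * ((β - 1 : ℕ) : ℝ) = (2:ℝ) - 2*β := by
    rw [Nat.cast_sub hβ]; push_cast; ring
  rw [this]; ring

lemma pd_radial_fst {K m : ℝ} {f : (Fin 3 → ℝ) → ℝ}
    (hf : ∀ y : Fin 3 → ℝ, 0 < y 0 → f y = K * (y 0) ^ m)
    (y : Fin 3 → ℝ) (hy : 0 < y 0) : pd 0 f y = K * m * y 0 ^ (m - 1) :=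
  pd_zero_of_radial hf y hy (hasDerivAt_CR K m hy)

set_option maxHeartbeats 1000000 in
lemma hessian_radial (α : ℝ) {K m : ℝ} {f : (Fin 3 → ℝ) → ℝ}
    (hf : ∀ y : Fin 3 → ℝ, 0 < y 0 → f y = K * (y 0) ^ m)
    (i j : Fin 3) (x : Fin 3 → ℝ) (hx : 0 < x 0) :
    hessian (gW α) f i j x =
      if i = 0 ∧ j = 0 then K*m*(m-1) * x 0 ^ (m-2)
      else if i = j then α*K*m * x 0 ^ (2*α + m - 2) else 0 := by
  have hch := fun k i j => christoffel_eq α k i j x hx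
  have hpd0 : ∀ y : Fin 3 → ℝ, 0 < y 0 → pd 0 f y = (K * m) * y 0 ^ (m-1) :=
    fun y hy => by rw [pd_radial_fst hf y hy]
  have hpdz : ∀ p : Fin 3, p ≠ 0 → ∀ y : Fin 3 → ℝ, 0 < y 0 → pd p f y = 0 :=
    fun p hp y hy => pd_ne_zero_of_radial (h := fun r => K * r ^ m) hf hp y hy
  have h00 : pd 0 (fun y => pd 0 f y) x = (K*m) * (m-1) * x 0 ^ (m-1-1) :=
    pd_radial_fst hpd0 x hx
  have h0i : ∀ p : Fin 3, p ≠ 0 → pd p (fun y => pd 0 f y) x = 0 :=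
    fun p hp => pd_ne_zero_of_radial (h := fun r => (K*m) * r ^ (m-1)) hpd0 hp x hx
  have hi0 : ∀ q : Fin 3, q ≠ 0 → ∀ p : Fin 3, pd p (fun y => pd q f y) x = 0 := by
    intro q hq p
    have hz : ∀ y : Fin 3 → ℝ, 0 < y 0 → pd q f y = (fun _ : ℝ => (0:ℝ)) (y 0) :=
      fun y hy => hpdz q hq y hy
    by_cases hp : p = 0
    · subst hp; exact pd_zero_of_radial hz x hx (hasDerivAt_const _ _)
    · exact pd_ne_zero_of_radial (h := fun _ => (0:ℝ)) hz hp x hx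
  have hpd0x := hpd0 x hx
  have hpdzx := fun p hp => hpdz p hp x hx
  have hmk2 : (⟨2, by omega⟩ : Fin 3) = (2 : Fin 3) := rfl
  fin_cases i <;> fin_cases j <;>
    simp only [Fin.mk_zero, Fin.mk_one, hmk2, hessian, Fin.sum_univ_three, hch, h00, hpd0x] <;>
    [skip; skip; skip; skip; skip; skip; skip; skip; skip] <;>
    norm_num [cC, eC, Fin.ext_iff, h0i, hi0, hpdzx]
  · exact Or.inl (by rw [show (m - 1 - 1 : ℝ) = m - 2 by ring])
  · rw [show (2*α + m - 2 : ℝ) = 2*α - 1 + (m - 1) by ring, Real.rpow_add hx]; ring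
  · rw [show (2*α + m - 2 : ℝ) = 2*α - 1 + (m - 1) by ring, Real.rpow_add hx]; ring

lemma lap_radial (α : ℝ) {K m : ℝ} {f : (Fin 3 → ℝ) → ℝ}
    (hf : ∀ y : Fin 3 → ℝ, 0 < y 0 → f y = K * (y 0) ^ m)
    (x : Fin 3 → ℝ) (hx : 0 < x 0) :
    lap (gW α) f x = -(K*m*(m-1) + 2*α*K*m) * x 0 ^ (m-2) := by
  have hinv := gW_inv α x hx
  have hhess := fun i j => hessian_radial α hf i j x hx
  simp only [lap, Fin.sum_univ_three, hinv, hhess]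
  norm_num [tE, Fin.ext_iff, Matrix.cons_val_two, Matrix.tail_cons, Matrix.head_cons]
  rw [show (2*α + m - 2 : ℝ) = 2*α + (m - 2) by ring, Real.rpow_add hx,
    Real.rpow_neg hx.le]
  have hAne : x 0 ^ (2*α) ≠ 0 := (Real.rpow_pos_of_pos hx _).ne'
  field_simp
  ring

set_option maxHeartbeats 1000000 in
lemma EF_eq (α : ℝ) (β : ℕ) (hβ : 0 < β) (x : Fin 3 → ℝ) (hx : 0 < x 0)
    (i j : Fin 3) :
    EF (fun s => s ^ β) (gW α) i j x =
      ((if i = 0 ∧ j = 0 then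
          -2*α*(α-1)*((β:ℝ) * (2*α*(2 - 3*α))^(β-1))
            + 2*α*((β:ℝ) * (2*α*(2 - 3*α))^(β-1))*((2:ℝ) - 2*β)
            - (2*α*(2 - 3*α))^β/2
        else
          (-α*(2*α-1) - α*((2:ℝ) - 2*β) + ((2:ℝ) - 2*β)*(((2:ℝ) - 2*β)-1)
              + 2*α*((2:ℝ) - 2*β)) * ((β:ℝ) * (2*α*(2 - 3*α))^(β-1))
            - (2*α*(2 - 3*α))^β/2)
        * x 0 ^ (((2:ℝ) - 2*β) - 2)) * gW α x i j := by
  set c : ℝ := 2*α*(2 - 3*α) with hc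
  set K : ℝ := (β:ℝ) * c^(β-1) with hK
  set m : ℝ := (2:ℝ) - 2*β with hm
  have hφ : ∀ y : Fin 3 → ℝ, 0 < y 0 →
      (fun y => deriv (fun s : ℝ => s ^ β) (scal (gW α) y)) y = K * (y 0) ^ m :=
    fun y hy => phi_eq α β hβ y hy
  have hφx := hφ x hx
  have hric := fun i j => ricci_eq α i j x hx
  have hhess := fun i j => hessian_radial α hφ i j x hx
  have hlapx := lap_radial α hφ x hx
  have hSβ : (scal (gW α) x) ^ β = c ^ β * x 0 ^ (m - 2) := by
    rw [scal_eq α x hx, mul_pow, ← Real.rpow_natCast (x 0 ^ (-2:ℝ)),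
      ← Real.rpow_mul hx.le]
    rw [show (-2:ℝ) * (β:ℝ) = m - 2 by rw [hm]; ring]
  have hgw := gW_entry α x
  have hmk2 : (⟨2, by omega⟩ : Fin 3) = (2 : Fin 3) := rfl
  fin_cases i <;> fin_cases j <;>
    simp only [Fin.mk_zero, Fin.mk_one, hmk2, EF, hφx, hric, hhess, hlapx,
      hSβ, hgw] <;>
    norm_num [rC, eR, tE, Fin.ext_iff, Matrix.cons_val_two, Matrix.tail_cons, Matrix.head_cons]
  · rw [show (m - 2 : ℝ) = m + (-2:ℝ) by ring, Real.rpow_add hx, Real.rpow_neg hx.le,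
      Real.rpow_two]; ring
  · rw [show (2*α - 2 : ℝ) = 2*α + (-2:ℝ) by ring, Real.rpow_add hx,
      show (2*α + m - 2 : ℝ) = 2*α + (m + (-2:ℝ)) by ring, Real.rpow_add hx,
      Real.rpow_add hx, show (m - 2 : ℝ) = m + (-2:ℝ) by ring, Real.rpow_add hx]
    ring
  · rw [show (2*α - 2 : ℝ) = 2*α + (-2:ℝ) by ring, Real.rpow_add hx,
      show (2*α + m - 2 : ℝ) = 2*α + (m + (-2:ℝ)) by ring, Real.rpow_add hx,
      Real.rpow_add hx, show (m - 2 : ℝ) = m + (-2:ℝ) by ring, Real.rpow_add hx]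
    ring


/-- **The warped product example.** -/
theorem warped_product_F_Einstein_example
    (α : ℝ) (hα0 : α ≠ 0) (hα23 : α ≠ 2 / 3)
    (β : ℕ) (hβ : 0 < β) :
    -- E_F(g) = λ g (for F(s) = s^β) iff α = −2(2β² − 3β + 1)/(2β − 3) ...
    ((∃ lam : ℝ, ∀ x : Fin 3 → ℝ, 0 < x 0 → ∀ i j,
        EF (fun s => s ^ β) (gW α) i j x = lam * gW α x i j)
      ↔ α = -2 * ((2 * (β : ℝ) ^ 2 - 3 * (β : ℝ) + 1) / (2 * (β : ℝ) - 3)))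
    -- ... and moreover the scalar curvature is S = 2α(2 − 3α)/r²
    ∧ (∀ x : Fin 3 → ℝ, 0 < x 0 →
        scal (gW α) x = 2 * α * (2 - 3 * α) / (x 0) ^ 2) := by
  have hc0 : (2*α*(2 - 3*α)) ≠ 0 := by
    have h1 : (2:ℝ) - 3*α ≠ 0 := fun h => hα23 (by linarith)
    exact mul_ne_zero (mul_ne_zero two_ne_zero hα0) h1
  have hβ1 : (1:ℝ) ≤ (β:ℝ) := by exact_mod_cast hβ
  have h32 : (3:ℝ) - 2*(β:ℝ) ≠ 0 := by
    intro h
    have h' : ((2*β : ℕ) : ℝ) = 3 := by push_cast; linarith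
    have : (2*β : ℕ) = 3 := by exact_mod_cast h'
    omega
  have h23 : 2*(β:ℝ) - 3 ≠ 0 := fun h => h32 (by linarith)
  have hcp : (2*α*(2-3*α))^β = (2*α*(2-3*α))^(β-1) * (2*α*(2-3*α)) := by
    conv_lhs => rw [← Nat.sub_add_cancel hβ]
    rw [pow_succ]
  set F0 : ℝ := (3 - 2*(β:ℝ))*α - (4*(β:ℝ)^2 - 6*(β:ℝ) + 2) with hF0
  have hA : (-2*α*(α-1)*((β:ℝ) * (2*α*(2 - 3*α))^(β-1))
        + 2*α*((β:ℝ) * (2*α*(2 - 3*α))^(β-1))*((2:ℝ) - 2*β)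
        - (2*α*(2 - 3*α))^β/2)
      = (2*α*(2-3*α))^(β-1) * (α * F0) := by
    rw [hcp, hF0]; ring
  have hB : ((-α*(2*α-1) - α*((2:ℝ) - 2*β) + ((2:ℝ) - 2*β)*(((2:ℝ) - 2*β)-1)
          + 2*α*((2:ℝ) - 2*β)) * ((β:ℝ) * (2*α*(2 - 3*α))^(β-1))
        - (2*α*(2 - 3*α))^β/2)
      = (2*α*(2-3*α))^(β-1) * ((α - (β:ℝ)) * F0) := by
    rw [hcp, hF0]; ring
  have hcne : (2*α*(2-3*α))^(β-1) ≠ 0 := pow_ne_zero _ hc0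
  constructor
  · constructor
    · rintro ⟨lam, hl⟩
      have e1 := hl (fun _ => 1) (by norm_num) 0 0
      have e2 := hl (fun _ => 2) (by norm_num) 0 0
      rw [EF_eq α β hβ _ (by norm_num) 0 0] at e1
      rw [EF_eq α β hβ _ (by norm_num) 0 0] at e2
      simp only [eq_self_iff_true, and_self, if_true, Real.one_rpow] at e1 e2
      rw [show gW α (fun _ => 1) 0 0 = 1 by norm_num [gW, Matrix.diagonal_apply]] at e1
      rw [show gW α (fun _ => 2) 0 0 = 1 by norm_num [gW, Matrix.diagonal_apply]] at e2
      have hpow_lt : (2:ℝ) ^ (((2:ℝ) - 2*β) - 2) < 1 :=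
        Real.rpow_lt_one_of_one_lt_of_neg one_lt_two (by linarith)
      have hAz : (-2*α*(α-1)*((β:ℝ) * (2*α*(2 - 3*α))^(β-1))
            + 2*α*((β:ℝ) * (2*α*(2 - 3*α))^(β-1))*((2:ℝ) - 2*β)
            - (2*α*(2 - 3*α))^β/2) = 0 := by
        have hz : (-2*α*(α-1)*((β:ℝ) * (2*α*(2 - 3*α))^(β-1))
              + 2*α*((β:ℝ) * (2*α*(2 - 3*α))^(β-1))*((2:ℝ) - 2*β)
              - (2*α*(2 - 3*α))^β/2)
            * ((2:ℝ) ^ (((2:ℝ) - 2*β) - 2) - 1) = 0 := by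
          linear_combination e2 - e1
        rcases mul_eq_zero.mp hz with h | h
        · exact h
        · exact absurd h (by intro h'; linarith)
      rw [hA] at hAz
      have hF00 : F0 = 0 := by
        rcases mul_eq_zero.mp hAz with h | h
        · exact absurd h hcne
        · rcases mul_eq_zero.mp h with h' | h'
          · exact absurd h' hα0
          · exact h'
      rw [hF0] at hF00
      field_simp
      linear_combination -hF00
    · intro hα
      have hF00 : F0 = 0 := by
        rw [hF0, hα]; field_simp; ring
      refine ⟨0, fun x hx i j => ?_⟩
      rw [EF_eq α β hβ x hx i j, zero_mul]
      split_ifs with h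
      · rw [hA, hF00]; ring
      · rw [hB, hF00]; ring
  · intro x hx
    rw [scal_eq α x hx, show (-2:ℝ) = -((2:ℕ):ℝ) by norm_num,
      Real.rpow_neg hx.le, Real.rpow_natCast, div_eq_mul_inv]
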